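/- arXiv:1401.3079 — 3 statements merged into one kernel-verified Lean document; each statement's English description precedes it below -/
import Mathlib

section
/- Differentiation formula: (d/dx) D_n(x|a_1,…,a_r) = n! ∑_{l=0}^{n-1} ((-1)^{n-l-1}/(l!(n-l))) D_l(x|a_1,…,a_r). -/
open Finset PowerSeries

/-- Exponential generating function: `∑ f n * t^n / n!`. -/
noncomputable def egf (f : ℕ → ℚ) : PowerSeries ℚ :=
  PowerSeries.mk fun n => f n / n.factorial

/-- The formal power series `log(1+t) = ∑_{m≥1} (-1)^{m-1} t^m / m`. -/
noncomputable def log1p : PowerSeries ℚ :=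
  PowerSeries.mk fun n => if n = 0 then 0 else (-1) ^ (n - 1) / n

/-- Formal exponential composition: for `f` with zero constant term this is
`exp(f) = ∑_k f^k / k!` (the sum in each coefficient is finite). -/
noncomputable def expPS (f : PowerSeries ℚ) : PowerSeries ℚ :=
  PowerSeries.mk fun n =>
    ∑ k ∈ Finset.range (n + 1), (PowerSeries.coeff n (f ^ k)) / k.factorial

/-- `(1+t)^a := exp(a · log(1+t))` as a formal power series. -/
noncomputable def onePow (a : ℚ) : PowerSeries ℚ := expPS (PowerSeries.C a * log1p)

/-- `e^{a t} = ∑ a^n t^n / n!`. -/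
noncomputable def expAt (a : ℚ) : PowerSeries ℚ :=
  PowerSeries.mk fun n => a ^ n / n.factorial

/-- Falling factorial `(x)_n = x(x-1)⋯(x-n+1)`. -/
noncomputable def ffall (x : ℚ) (n : ℕ) : ℚ := ∏ i ∈ Finset.range n, (x - i)

lemma X_dvd_log1p : (X : PowerSeries ℚ) ∣ log1p := by
  rw [PowerSeries.X_dvd_iff]
  simp [log1p, PowerSeries.constantCoeff_mk]

lemma coeff_log1p_pow_eq_zero {n k : ℕ} (h : n < k) : coeff n (log1p ^ k) = 0 := by
  have : (X : PowerSeries ℚ) ^ k ∣ log1p ^ k := pow_dvd_pow_of_dvd X_dvd_log1p k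
  exact PowerSeries.X_pow_dvd_iff.mp this n h

noncomputable def Qpoly (n : ℕ) : Polynomial ℚ :=
  ∑ k ∈ Finset.range (n+1),
    Polynomial.C ((PowerSeries.coeff n (log1p ^ k)) / k.factorial) * Polynomial.X ^ k

lemma coeff_onePow (x : ℚ) (n : ℕ) : coeff n (onePow x) = (Qpoly n).eval x := by
  simp only [onePow, expPS, coeff_mk, Qpoly, Polynomial.eval_finset_sum, Polynomial.eval_mul,
    Polynomial.eval_C, Polynomial.eval_pow, Polynomial.eval_X, mul_pow, ← map_pow,
    PowerSeries.coeff_C_mul]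
  apply Finset.sum_congr rfl
  intro k _
  ring

lemma coeff_log1p_one : coeff 1 log1p = 1 := by simp [log1p]

lemma onePow_sub_one_ne (b : ℚ) (hb : b ≠ 0) : onePow b - 1 ≠ 0 := by
  intro h
  have h1 : coeff 1 (onePow b - 1) = 0 := by rw [h]; simp
  rw [map_sub, coeff_onePow] at h1
  simp [Qpoly, Finset.sum_range_succ, coeff_log1p_one, PowerSeries.coeff_one] at h1
  exact hb h1

lemma eval_derivative_Qpoly (x : ℚ) (n : ℕ) :
    (Polynomial.derivative (Qpoly n)).eval x
      = ∑ j ∈ Finset.range n, (coeff n (log1p ^ (j+1)) / j.factorial) * x ^ j := by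
  simp only [Qpoly, map_sum, Polynomial.derivative_C_mul, Polynomial.derivative_X_pow,
    Polynomial.eval_finset_sum, Polynomial.eval_mul, Polynomial.eval_C, Polynomial.eval_pow,
    Polynomial.eval_X]
  rw [Finset.sum_range_succ']
  simp only [Nat.cast_zero, zero_mul, mul_zero, add_zero, Nat.cast_ofNat]
  apply Finset.sum_congr rfl
  intro j _
  have : ((j+1).factorial : ℚ) = (j+1) * j.factorial := by
    rw [Nat.factorial_succ]; push_cast; ring
  rw [this]
  have hj : ((j:ℚ)+1) ≠ 0 := by positivity
  have hf : ((j.factorial : ℚ)) ≠ 0 := Nat.cast_ne_zero.mpr j.factorial_ne_zero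
  field_simp
  rw [Nat.add_sub_cancel]; push_cast; ring

lemma coeff_log1p_mul_onePow (x : ℚ) (n : ℕ) :
    coeff n (log1p * onePow x)
      = ∑ j ∈ Finset.range n, (coeff n (log1p ^ (j+1)) / j.factorial) * x ^ j := by
  rw [PowerSeries.coeff_mul]
  have step1 : ∀ p ∈ antidiagonal n,
      coeff p.1 log1p * coeff p.2 (onePow x)
        = ∑ k ∈ Finset.range (n+1),
            coeff p.1 log1p * (coeff p.2 (log1p ^ k) / k.factorial * x ^ k) := by
    intro p hp
    have hp2 : p.2 ≤ n := le_of_add_le_right (Finset.HasAntidiagonal.mem_antidiagonal.mp hp).le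
    have : coeff p.2 (onePow x)
        = ∑ k ∈ Finset.range (n+1), coeff p.2 (log1p ^ k) / k.factorial * x ^ k := by
      simp only [onePow, expPS, coeff_mk, mul_pow, ← map_pow, PowerSeries.coeff_C_mul]
      rw [Finset.sum_subset (Finset.range_subset_range.mpr (Nat.succ_le_succ hp2))]
      · apply Finset.sum_congr rfl; intro k _; ring
      · intro k _ hk
        rw [coeff_log1p_pow_eq_zero (by simpa using hk)]
        simp
    rw [this, Finset.mul_sum]
  rw [Finset.sum_congr rfl step1, Finset.sum_comm]
  have step2 : ∀ k ∈ Finset.range (n+1),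
      (∑ p ∈ antidiagonal n, coeff p.1 log1p * (coeff p.2 (log1p ^ k) / k.factorial * x ^ k))
        = coeff n (log1p ^ (k+1)) / k.factorial * x ^ k := by
    intro k _
    have : coeff n (log1p ^ (k+1))
        = ∑ p ∈ antidiagonal n, coeff p.1 log1p * coeff p.2 (log1p ^ k) := by
      rw [pow_succ', PowerSeries.coeff_mul]
    rw [this, Finset.sum_div, Finset.sum_mul]
    apply Finset.sum_congr rfl; intro p _; ring
  rw [Finset.sum_congr rfl step2, Finset.sum_range_succ,
    coeff_log1p_pow_eq_zero (Nat.lt_succ_self n)]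
  simp only [zero_div, zero_mul, add_zero]

lemma coeff_mul_egf (P : PowerSeries ℚ) (f : ℕ → ℚ) (m : ℕ) :
    coeff m (P * egf f)
      = ∑ p ∈ antidiagonal m, coeff p.1 P * (f p.2 / p.2.factorial) := by
  rw [PowerSeries.coeff_mul]
  apply Finset.sum_congr rfl; intro p _
  simp [egf]

theorem stmt9 (r : ℕ) (a : Fin r → ℚ) (ha : ∀ j, a j ≠ 0) (D : ℕ → Polynomial ℚ)
    (hD : ∀ x : ℚ, (∏ j, (onePow (a j) - 1)) * egf (fun n => (D n).eval x) = log1p ^ r * onePow x)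
    (n : ℕ) :
    Polynomial.derivative (D n) =
      ∑ l ∈ Finset.range n,
        Polynomial.C ((n.factorial : ℚ) * (-1) ^ (n - l - 1) /
          ((l.factorial : ℚ) * ((n - l : ℕ) : ℚ))) * D l := by
  set P : PowerSeries ℚ := ∏ j, (onePow (a j) - 1) with hP
  have hPne : P ≠ 0 := by
    rw [hP]
    exact Finset.prod_ne_zero_iff.mpr fun j _ => onePow_sub_one_ne (a j) (ha j)
  -- polynomial form of the coefficient identity
  have hpoly : ∀ m : ℕ,
      (∑ p ∈ antidiagonal m, Polynomial.C (coeff p.1 P / p.2.factorial) * D p.2)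
        = ∑ p ∈ antidiagonal m, Polynomial.C (coeff p.1 (log1p ^ r)) * Qpoly p.2 := by
    intro m
    apply Polynomial.funext
    intro x
    have h1 := congrArg (coeff m) (hD x)
    rw [coeff_mul_egf, PowerSeries.coeff_mul] at h1
    simp only [Polynomial.eval_finset_sum, Polynomial.eval_mul, Polynomial.eval_C]
    calc ∑ p ∈ antidiagonal m, coeff p.1 P / p.2.factorial * (D p.2).eval x
        = ∑ p ∈ antidiagonal m, coeff p.1 P * ((D p.2).eval x / p.2.factorial) := by
          apply Finset.sum_congr rfl; intro p _; ring
      _ = ∑ p ∈ antidiagonal m, coeff p.1 (log1p ^ r) * coeff p.2 (onePow x) := h1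
      _ = _ := by apply Finset.sum_congr rfl; intro p _; rw [coeff_onePow]
  -- differentiate
  have hder : ∀ (m : ℕ) (x : ℚ),
      coeff m (P * egf (fun l => (Polynomial.derivative (D l)).eval x))
        = coeff m (log1p ^ r * (log1p * onePow x)) := by
    intro m x
    have h2 := congrArg (fun q => (Polynomial.derivative q).eval x) (hpoly m)
    simp only [map_sum, Polynomial.derivative_C_mul, Polynomial.eval_finset_sum,
      Polynomial.eval_mul, Polynomial.eval_C] at h2
    rw [coeff_mul_egf, PowerSeries.coeff_mul]
    calc ∑ p ∈ antidiagonal m, coeff p.1 P * ((Polynomial.derivative (D p.2)).eval x / p.2.factorial)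
        = ∑ p ∈ antidiagonal m, coeff p.1 P / p.2.factorial * (Polynomial.derivative (D p.2)).eval x := by
          apply Finset.sum_congr rfl; intro p _; ring
      _ = ∑ p ∈ antidiagonal m, coeff p.1 (log1p ^ r) * (Polynomial.derivative (Qpoly p.2)).eval x := h2
      _ = ∑ p ∈ antidiagonal m, coeff p.1 (log1p ^ r) * coeff p.2 (log1p * onePow x) := by
          apply Finset.sum_congr rfl; intro p _
          rw [eval_derivative_Qpoly, coeff_log1p_mul_onePow]
  have hser : ∀ x : ℚ,
      egf (fun l => (Polynomial.derivative (D l)).eval x)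
        = log1p * egf (fun l => (D l).eval x) := by
    intro x
    apply mul_left_cancel₀ hPne
    have key : P * (log1p * egf fun l => (D l).eval x) = log1p ^ r * (log1p * onePow x) := by
      have : P * (log1p * egf fun l => (D l).eval x)
          = log1p * (P * egf fun l => (D l).eval x) := by ring
      rw [this, hD x]; ring
    rw [key]
    ext m
    exact hder m x
  -- extract coefficient n
  apply Polynomial.funext
  intro x
  have h3 := congrArg (coeff n) (hser x)
  rw [PowerSeries.coeff_mul] at h3
  simp only [egf, coeff_mk] at h3
  have hfac : ((n.factorial : ℚ)) ≠ 0 := Nat.cast_ne_zero.mpr n.factorial_ne_zero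
  have h4 : (Polynomial.derivative (D n)).eval x
      = (n.factorial : ℚ) * ∑ p ∈ antidiagonal n, coeff p.1 log1p * ((D p.2).eval x / p.2.factorial) := by
    rw [← h3]; field_simp
  rw [h4, Finset.Nat.sum_antidiagonal_eq_sum_range_succ_mk, Finset.sum_range_succ']
  simp only [Nat.sub_zero]
  have hzero : coeff 0 log1p = 0 := by simp [log1p]
  rw [hzero]
  simp only [zero_mul, add_zero]
  rw [Polynomial.eval_finset_sum]
  rw [← Finset.sum_range_reflect]
  rw [Finset.mul_sum]
  apply Finset.sum_congr rfl
  intro j hj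
  have hj' : j < n := Finset.mem_range.mp hj
  simp only [Polynomial.eval_mul, Polynomial.eval_C]
  have e1 : n - 1 - j + 1 = n - j := by omega
  rw [e1]
  have e2 : n - (n - j) = j := by omega
  rw [e2]
  have hc : coeff (n-j) log1p = (-1)^(n-j-1) / ((n-j : ℕ) : ℚ) := by
    rw [log1p, coeff_mk, if_neg (by omega)]
  rw [hc]
  have hne1 : (((n-j : ℕ)) : ℚ) ≠ 0 := Nat.cast_ne_zero.mpr (by omega)
  have hne2 : ((j.factorial : ℚ)) ≠ 0 := Nat.cast_ne_zero.mpr (Nat.factorial_ne_zero _)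
  field_simp
end

section
/- Recurrence via Cauchy numbers: for n ≥ 1, D_n(x|a_1,…,a_r) = x·D_{n-1}(x−1|a_1,…,a_r) + (r/n)∑_{l=0}^n C(n,l) c_l D_{n-l}(x−1|a_1,…,a_r) − (1/n)∑_{j=1}^r ∑_{l=0}^n C(n,l) a_j c_l D_{n-l}(x+a_j−1|a_1,…,a_r,a_j), where in the last term the polynomial has r+1 parameters a_1,…,a_r,a_j. -/
open Finset PowerSeries

section Lemmas

lemma coeff_pow_eq_zero {f : PowerSeries ℚ} (hf : constantCoeff f = 0)
    {k n : ℕ} (h : n < k) : coeff n (f ^ k) = 0 := by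
  have : (X : PowerSeries ℚ) ^ k ∣ f ^ k := pow_dvd_pow_of_dvd (X_dvd_iff.mpr hf) k
  exact X_pow_dvd_iff.mp this n h

lemma constantCoeff_expPS (f : PowerSeries ℚ) :
    constantCoeff (expPS f) = 1 := by
  rw [← coeff_zero_eq_constantCoeff_apply]
  simp [expPS, coeff_mk]

/-- Uniqueness of solutions of `u' = g u` with the same constant term. -/
lemma ode_unique {g u v : PowerSeries ℚ} (hu : d⁄dX ℚ u = g * u) (hv : d⁄dX ℚ v = g * v)
    (h0 : constantCoeff u = constantCoeff v) : u = v := by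
  ext n
  induction n using Nat.strong_induction_on with
  | _ n ih =>
    match n with
    | 0 => simpa [coeff_zero_eq_constantCoeff] using h0
    | Nat.succ m =>
      have h1 : coeff m (d⁄dX ℚ u) = coeff m (d⁄dX ℚ v) := by
        rw [hu, hv, coeff_mul, coeff_mul]
        refine Finset.sum_congr rfl fun p hp => ?_
        have hp2 : p.2 < m + 1 := by
          have := Finset.HasAntidiagonal.mem_antidiagonal.mp hp
          omega
        rw [ih p.2 hp2]
      have h2 := coeff_derivative u m
      have h3 := coeff_derivative v m
      have : coeff (m+1) u * (m+1) = coeff (m+1) v * (m+1) := by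
        rw [← h2, ← h3]; exact h1
      have hm : ((m:ℚ)+1) ≠ 0 := by positivity
      exact mul_right_cancel₀ hm this

lemma derivative_expPS {f : PowerSeries ℚ} (hf : constantCoeff f = 0) :
    d⁄dX ℚ (expPS f) = d⁄dX ℚ f * expPS f := by
  ext n
  rw [coeff_derivative]
  have hL : coeff (n+1) (expPS f) * ((n:ℚ)+1)
      = ∑ m ∈ Finset.range (n+1), coeff (n+1) (f ^ (m+1)) * (((n:ℚ)+1) / (m+1).factorial) := by
    rw [expPS, coeff_mk, Finset.sum_range_succ']
    simp only [pow_zero, coeff_one, if_neg (Nat.succ_ne_zero n), zero_div, add_zero]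
    rw [Finset.sum_mul]
    refine Finset.sum_congr rfl fun m _ => ?_
    field_simp
  rw [hL, coeff_mul]
  have hR : ∀ p ∈ antidiagonal n,
      coeff p.1 (d⁄dX ℚ f) * coeff p.2 (expPS f)
      = ∑ m ∈ Finset.range (n+1), coeff p.1 (d⁄dX ℚ f) * coeff p.2 (f ^ m) / m.factorial := by
    intro p hp
    have hp2 : p.2 ≤ n := by have := Finset.HasAntidiagonal.mem_antidiagonal.mp hp; omega
    rw [expPS, coeff_mk, Finset.mul_sum]
    calc ∑ k ∈ Finset.range (p.2+1), coeff p.1 (d⁄dX ℚ f) * (coeff p.2 (f ^ k) / k.factorial)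
        = ∑ k ∈ Finset.range (p.2+1), coeff p.1 (d⁄dX ℚ f) * coeff p.2 (f ^ k) / k.factorial :=
          Finset.sum_congr rfl fun k _ => (mul_div_assoc _ _ _).symm
      _ = ∑ m ∈ Finset.range (n+1), coeff p.1 (d⁄dX ℚ f) * coeff p.2 (f ^ m) / m.factorial := by
          refine Finset.sum_subset (Finset.range_subset_range.mpr (by omega)) fun m _ hm => ?_
          simp only [Finset.mem_range, not_lt] at hm
          rw [coeff_pow_eq_zero hf (by omega)]
          simp
  rw [Finset.sum_congr rfl hR, Finset.sum_comm]
  refine Finset.sum_congr rfl fun m _ => ?_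
  rw [← Finset.sum_div, ← coeff_mul]
  have h1 := coeff_derivative (f ^ (m+1)) n
  rw [Derivation.leibniz_pow] at h1
  simp only [Nat.add_sub_cancel] at h1
  rw [map_nsmul, smul_eq_mul, nsmul_eq_mul] at h1
  push_cast at h1
  have hm1 : ((m:ℚ)+1) ≠ 0 := by positivity
  have hfact : ((m.factorial : ℚ)) ≠ 0 := Nat.cast_ne_zero.mpr m.factorial_ne_zero
  rw [Nat.factorial_succ]
  push_cast
  rw [mul_comm (d⁄dX ℚ f) (f ^ m)]
  field_simp
  linear_combination (-1 : ℚ) * h1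

lemma coeff_dlog1p (n : ℕ) : coeff n (d⁄dX ℚ log1p) = (-1) ^ n := by
  rw [coeff_derivative, log1p, coeff_mk, if_neg (Nat.succ_ne_zero n)]
  simp only [Nat.add_sub_cancel]
  push_cast
  field_simp

lemma constantCoeff_log1p : constantCoeff log1p = 0 := by
  rw [← coeff_zero_eq_constantCoeff_apply, log1p, coeff_mk]; simp

lemma dd_log1p : d⁄dX ℚ (d⁄dX ℚ log1p) = -(d⁄dX ℚ log1p) ^ 2 := by
  ext n
  rw [coeff_derivative, coeff_dlog1p, map_neg, pow_two, coeff_mul]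
  have : ∀ p ∈ antidiagonal n,
      coeff p.1 (d⁄dX ℚ log1p) * coeff p.2 (d⁄dX ℚ log1p) = (-1) ^ n := by
    intro p hp
    rw [coeff_dlog1p, coeff_dlog1p, ← pow_add, Finset.HasAntidiagonal.mem_antidiagonal.mp hp]
  rw [Finset.sum_congr rfl this, Finset.sum_const, Finset.Nat.card_antidiagonal]
  ring

lemma constantCoeff_CL (a : ℚ) : constantCoeff (C a * log1p) = 0 := by
  rw [map_mul, constantCoeff_log1p, mul_zero]

lemma constantCoeff_onePow (a : ℚ) : constantCoeff (onePow a) = 1 :=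
  constantCoeff_expPS _

lemma d_onePow (y : ℚ) : d⁄dX ℚ (onePow y) = C y * d⁄dX ℚ log1p * onePow y := by
  rw [onePow, derivative_expPS (constantCoeff_CL y), Derivation.leibniz]
  simp only [derivative_C, map_zero, smul_zero, zero_add, smul_eq_mul]
  ring

lemma constantCoeff_dlog1p : constantCoeff (d⁄dX ℚ log1p) = 1 := by
  rw [← coeff_zero_eq_constantCoeff_apply, coeff_dlog1p, pow_zero]

lemma dlog1p_mul_onePow (y : ℚ) : d⁄dX ℚ log1p * onePow y = onePow (y - 1) := by
  refine ode_unique (g := C (y - 1) * d⁄dX ℚ log1p) ?_ ?_ ?_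
  · rw [Derivation.leibniz, smul_eq_mul, smul_eq_mul, d_onePow, dd_log1p, map_sub, map_one]
    ring
  · exact d_onePow (y - 1)
  · rw [map_mul, constantCoeff_dlog1p, constantCoeff_onePow, constantCoeff_onePow, one_mul]

lemma onePow_add (y z : ℚ) : onePow y * onePow z = onePow (y + z) := by
  refine ode_unique (g := C (y + z) * d⁄dX ℚ log1p) ?_ (d_onePow (y + z)) ?_
  · rw [Derivation.leibniz, smul_eq_mul, smul_eq_mul, d_onePow, d_onePow, map_add]
    ring
  · rw [map_mul, constantCoeff_onePow, constantCoeff_onePow, constantCoeff_onePow, one_mul]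

lemma coeff_one_onePow (a : ℚ) : coeff 1 (onePow a) = a := by
  rw [onePow, expPS, coeff_mk]
  rw [show (1:ℕ) + 1 = 2 from rfl, Finset.sum_range_succ, Finset.sum_range_one]
  simp only [pow_zero, pow_one, coeff_one, if_neg one_ne_zero, zero_div, zero_add]
  rw [coeff_C_mul, log1p, coeff_mk]
  norm_num

lemma onePow_sub_one_ne_zero {a : ℚ} (ha : a ≠ 0) : onePow a - 1 ≠ 0 := by
  intro h
  have := congrArg (coeff 1) h
  rw [map_sub, coeff_one_onePow, coeff_one, if_neg one_ne_zero, map_zero, sub_zero] at this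
  exact ha this

lemma d_prod {ι : Type*} [DecidableEq ι] (s : Finset ι) (f : ι → PowerSeries ℚ) :
    d⁄dX ℚ (∏ i ∈ s, f i) = ∑ j ∈ s, d⁄dX ℚ (f j) * ∏ i ∈ s.erase j, f i := by
  induction s using Finset.induction_on with
  | empty => simp
  | insert b s' ha ih =>
    rw [Finset.prod_insert ha, Derivation.leibniz, smul_eq_mul, smul_eq_mul, ih,
      Finset.sum_insert ha, Finset.erase_insert ha, Finset.mul_sum]
    rw [Finset.sum_congr rfl (fun j hj => ?_)]
    · ring
    · rw [Finset.erase_insert_of_ne (by rintro rfl; exact ha hj), Finset.prod_insert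
        (fun h => ha (Finset.mem_of_mem_erase h))]
      ring

theorem main_identity (r : ℕ) (a : Fin r → ℚ) (ha : ∀ j, a j ≠ 0) (D : ℕ → ℚ → ℚ)
    (hD : ∀ x : ℚ, (∏ j, (onePow (a j) - 1)) * egf (fun n => D n x) = log1p ^ r * onePow x)
    (E : Fin r → ℕ → ℚ → ℚ)
    (hE : ∀ (j : Fin r) (x : ℚ),
      ((onePow (a j) - 1) * ∏ i, (onePow (a i) - 1)) * egf (fun n => E j n x) =
        log1p ^ (r + 1) * onePow x)
    (c : ℕ → ℚ) (hc : log1p * egf c = PowerSeries.X) (x : ℚ) :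
    X * d⁄dX ℚ (egf (fun n => D n x)) =
      C x * (X * egf (fun n => D n (x-1)))
      + C (r:ℚ) * (egf c * egf (fun n => D n (x-1)))
      - ∑ j, C (a j) * (egf c * egf (fun n => E j n (x + a j - 1))) := by
  set L : PowerSeries ℚ := log1p with hL
  set G : PowerSeries ℚ := egf c with hG
  set Q : PowerSeries ℚ := ∏ j, (onePow (a j) - 1) with hQdef
  have hQ : Q ≠ 0 := Finset.prod_ne_zero_iff.mpr fun j _ => onePow_sub_one_ne_zero (ha j)
  apply mul_left_cancel₀ (mul_ne_zero hQ hQ)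
  set dL : PowerSeries ℚ := d⁄dX ℚ L with hdL
  set Fx : PowerSeries ℚ := egf (fun n => D n x) with hFx
  set Fy : PowerSeries ℚ := egf (fun n => D n (x-1)) with hFy
  have hdQ : d⁄dX ℚ Q = ∑ j, (C (a j) * dL * onePow (a j)) *
      ∏ i ∈ Finset.univ.erase j, (onePow (a i) - 1) := by
    rw [hQdef, d_prod]
    refine Finset.sum_congr rfl fun j _ => ?_
    rw [map_sub, Derivation.map_one_eq_zero, sub_zero, d_onePow]
  have hdLrX : d⁄dX ℚ (L ^ r) * X = C (r:ℚ) * (L ^ r * G * dL) := by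
    cases r with
    | zero => simp
    | succ s =>
      rw [Derivation.leibniz_pow, Nat.add_sub_cancel, smul_eq_mul,
        ← Nat.cast_smul_eq_nsmul (PowerSeries ℚ) (s+1) (L ^ s * d⁄dX ℚ L), smul_eq_mul, ← hc]
      push_cast
      rw [map_add, map_one, map_natCast]
      ring
  have e1 : Q * d⁄dX ℚ Fx = d⁄dX ℚ (L ^ r * onePow x) - Fx * d⁄dX ℚ Q := by
    have := congrArg (d⁄dX ℚ) (hD x)
    rw [Derivation.leibniz, smul_eq_mul, smul_eq_mul] at this
    rw [← hFx] at this
    linear_combination this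
  have hA : X * (Q * d⁄dX ℚ (L ^ r * onePow x)) =
      C x * (X * (L ^ r * onePow (x-1))) * Q + C (r:ℚ) * (G * (L ^ r * onePow (x-1)) * Q) := by
    rw [Derivation.leibniz, smul_eq_mul, smul_eq_mul, d_onePow x]
    have h6 : dL * onePow x = onePow (x - 1) := dlog1p_mul_onePow x
    linear_combination (C x * X * Q * L ^ r) * h6 + (Q * onePow x) * hdLrX
      + (C (r:ℚ) * L ^ r * G * Q) * h6
  have hB : X * (Q * (Fx * d⁄dX ℚ Q)) =
      ∑ j, C (a j) * G * (L ^ (r+1) * onePow (x + a j - 1)) *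
        ∏ i ∈ Finset.univ.erase j, (onePow (a i) - 1) := by
    rw [hdQ, Finset.mul_sum, Finset.mul_sum, Finset.mul_sum]
    refine Finset.sum_congr rfl fun j _ => ?_
    have h1 : Q * Fx = L ^ r * onePow x := hD x
    have h3 : onePow (a j) * onePow x = onePow (a j + x) := onePow_add _ _
    have h4 : dL * onePow (a j + x) = onePow (a j + x - 1) := dlog1p_mul_onePow _
    have harg : x + a j - 1 = a j + x - 1 := by ring
    rw [harg]
    linear_combination (C (a j) * dL * onePow (a j) *
        (∏ i ∈ Finset.univ.erase j, (onePow (a i) - 1)) * X) * h1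
      - (C (a j) * dL * onePow (a j) * (∏ i ∈ Finset.univ.erase j, (onePow (a i) - 1))
          * L ^ r * onePow x) * hc
      + (C (a j) * G * L ^ (r+1) * (∏ i ∈ Finset.univ.erase j, (onePow (a i) - 1)) * dL) * h3
      + (C (a j) * G * L ^ (r+1) * (∏ i ∈ Finset.univ.erase j, (onePow (a i) - 1))) * h4
  have hC : ∀ j : Fin r, Q * Q * (C (a j) * (G * egf (fun n => E j n (x + a j - 1)))) =
      C (a j) * G * (L ^ (r+1) * onePow (x + a j - 1)) *
        ∏ i ∈ Finset.univ.erase j, (onePow (a i) - 1) := by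
    intro j
    have hsplit : Q = (onePow (a j) - 1) * ∏ i ∈ Finset.univ.erase j, (onePow (a i) - 1) :=
      (Finset.mul_prod_erase Finset.univ _ (Finset.mem_univ j)).symm
    have hEj := hE j (x + a j - 1)
    linear_combination (Q * (C (a j) * (G * egf (fun n => E j n (x + a j - 1))))) * hsplit
      + (C (a j) * G * (∏ i ∈ Finset.univ.erase j, (onePow (a i) - 1))) * hEj
  calc Q * Q * (X * d⁄dX ℚ Fx)
      = X * (Q * d⁄dX ℚ (L ^ r * onePow x)) - X * (Q * (Fx * d⁄dX ℚ Q)) := by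
        linear_combination (X * Q) * e1
    _ = C x * (X * (L ^ r * onePow (x-1))) * Q + C (r:ℚ) * (G * (L ^ r * onePow (x-1)) * Q)
        - ∑ j, C (a j) * G * (L ^ (r+1) * onePow (x + a j - 1)) *
            ∏ i ∈ Finset.univ.erase j, (onePow (a i) - 1) := by rw [hA, hB]
    _ = Q * Q * (C x * (X * Fy) + C (r:ℚ) * (G * Fy)
        - ∑ j, C (a j) * (G * egf (fun n => E j n (x + a j - 1)))) := by
        have h2 : Q * Fy = L ^ r * onePow (x - 1) := hD (x-1)
        rw [Finset.sum_congr rfl fun j _ => (hC j).symm]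
        rw [← Finset.mul_sum]
        linear_combination (-(C x * X * Q) - C (r:ℚ) * G * Q) * h2

end Lemmas

theorem stmt12 (r : ℕ) (a : Fin r → ℚ) (ha : ∀ j, a j ≠ 0) (D : ℕ → ℚ → ℚ)
    (hD : ∀ x : ℚ, (∏ j, (onePow (a j) - 1)) * egf (fun n => D n x) = log1p ^ r * onePow x)
    (E : Fin r → ℕ → ℚ → ℚ)
    (hE : ∀ (j : Fin r) (x : ℚ),
      ((onePow (a j) - 1) * ∏ i, (onePow (a i) - 1)) * egf (fun n => E j n x) =
        log1p ^ (r + 1) * onePow x)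
    (c : ℕ → ℚ) (hc : log1p * egf c = PowerSeries.X)
    (n : ℕ) (hn : 1 ≤ n) (x : ℚ) :
    D n x = x * D (n - 1) (x - 1)
      + (r : ℚ) / n * ∑ l ∈ Finset.range (n + 1), (n.choose l : ℚ) * c l * D (n - l) (x - 1)
      - (1 / n) * ∑ j, ∑ l ∈ Finset.range (n + 1),
          (n.choose l : ℚ) * a j * c l * E j (n - l) (x + a j - 1) := by
  obtain ⟨m, rfl⟩ : ∃ m, n = m + 1 := ⟨n - 1, by omega⟩
  have main := main_identity r a ha D hD E hE c hc x
  have hco := congrArg (coeff (m+1)) main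
  rw [coeff_succ_X_mul, coeff_derivative, map_sub, map_add, coeff_C_mul, coeff_C_mul,
    coeff_succ_X_mul, map_sum] at hco
  rw [egf, egf, coeff_mk, coeff_mk, coeff_mul,
    Nat.sum_antidiagonal_eq_sum_range_succ_mk] at hco
  have hsumE : ∀ j : Fin r, coeff (m+1) (C (a j) * (egf c * egf (fun n => E j n (x + a j - 1))))
      = a j * ∑ l ∈ Finset.range (m+1+1),
          (c l / l.factorial) * (E j (m+1-l) (x + a j - 1) / (m+1-l).factorial) := by
    intro j
    rw [coeff_C_mul, coeff_mul, Nat.sum_antidiagonal_eq_sum_range_succ_mk]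
    congr 1
    refine Finset.sum_congr rfl fun l _ => ?_
    rw [egf, egf, coeff_mk, coeff_mk]
  rw [Finset.sum_congr rfl fun j _ => hsumE j] at hco
  simp only [egf, coeff_mk] at hco
  have hfact : ∀ k : ℕ, ((k.factorial : ℚ)) ≠ 0 := fun k => Nat.cast_ne_zero.mpr k.factorial_ne_zero
  have hS1 : ∑ l ∈ Finset.range (m+1+1), ((m+1).choose l : ℚ) * c l * D (m+1-l) (x-1)
      = (m+1).factorial * ∑ l ∈ Finset.range (m+1+1),
          (c l / l.factorial) * (D (m+1-l) (x-1) / (m+1-l).factorial) := by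
    rw [Finset.mul_sum]
    refine Finset.sum_congr rfl fun l hl => ?_
    have hl' : l ≤ m+1 := by simp at hl; omega
    rw [Nat.cast_choose ℚ hl']
    field_simp
  have hS2 : ∀ j : Fin r, ∑ l ∈ Finset.range (m+1+1),
        ((m+1).choose l : ℚ) * a j * c l * E j (m+1-l) (x + a j - 1)
      = (m+1).factorial * (a j * ∑ l ∈ Finset.range (m+1+1),
          (c l / l.factorial) * (E j (m+1-l) (x + a j - 1) / (m+1-l).factorial)) := by
    intro j
    rw [Finset.mul_sum, Finset.mul_sum]
    refine Finset.sum_congr rfl fun l hl => ?_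
    have hl' : l ≤ m+1 := by simp at hl; omega
    rw [Nat.cast_choose ℚ hl']
    field_simp
  rw [hS1, Finset.sum_congr rfl fun j _ => hS2 j, ← Finset.mul_sum]
  have hm1 : ((m:ℚ)+1) ≠ 0 := by positivity
  have hmf := hfact (m+1)
  rw [Nat.succ_sub_one]
  set S1 := ∑ l ∈ Finset.range (m+1+1),
      (c l / l.factorial) * (D (m+1-l) (x-1) / (m+1-l).factorial) with hS1d
  set S2 := ∑ j, a j * ∑ l ∈ Finset.range (m+1+1),
      (c l / l.factorial) * (E j (m+1-l) (x + a j - 1) / (m+1-l).factorial) with hS2d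
  push_cast [Nat.factorial_succ] at hco ⊢
  field_simp at hco ⊢
  have hD2 : D (m+1) x * (((m:ℚ)+1) * m.factorial) =
      (x * D m (x - 1) + (r:ℚ) * S1 * m.factorial - (m.factorial:ℚ) * S2) *
        (((m:ℚ)+1) * m.factorial) := by linear_combination (((m:ℚ)+1) * m.factorial) * hco
  have hD3 := mul_right_cancel₀ (mul_ne_zero hm1 (hfact m)) hD2
  linear_combination hD3
end

section
/- Expansion in higher-order Bernoulli polynomials: D_n(x|a_1,…,a_r) = ∑_{m=0}^n ( ∑_{i=0}^{n-m} ∑_{l=0}^{n-m-i} C(n,i) C(n-i,l) 𝔠_i^{(s)} S_1(n-i-l,m) D_l(a_1,…,a_r) ) 𝔅_m^{(s)}(x), for any integer s ≥ 0. -/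
open Finset PowerSeries

-- basic facts
lemma cL0 : PowerSeries.constantCoeff log1p = 0 := by
  rw [← PowerSeries.coeff_zero_eq_constantCoeff_apply]; simp [log1p]

lemma cLk_zero {m k : ℕ} (h : m < k) : PowerSeries.coeff m (log1p ^ k) = 0 := by
  have : (PowerSeries.X : PowerSeries ℚ) ^ k ∣ log1p ^ k :=
    pow_dvd_pow_of_dvd (PowerSeries.X_dvd_iff.2 cL0) k
  exact PowerSeries.X_pow_dvd_iff.1 this m h

-- padding lemma
lemma sum_pad {M : Type*} [AddCommMonoid M] {a b : ℕ} (h : a ≤ b) (f : ℕ → M)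
    (hf : ∀ m, a < m → f m = 0) :
    ∑ m ∈ range (b + 1), f m = ∑ m ∈ range (a + 1), f m := by
  rw [← Finset.sum_subset (Finset.range_subset_range.2 (by omega) : range (a+1) ⊆ range (b+1))]
  intro x hx hnx
  exact hf x (by simp at hx hnx ⊢; omega)

lemma triangle {M : Type*} [AddCommMonoid M] (n : ℕ) (F : ℕ → ℕ → M) :
    ∑ k ∈ range (n + 1), ∑ i ∈ range (k + 1), F i (k - i)
      = ∑ i ∈ range (n + 1), ∑ j ∈ range (n + 1 - i), F i j := by
  induction n with
  | zero => simp
  | succ n ih =>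
    rw [Finset.sum_range_succ, ih]
    have h1 : ∑ i ∈ range (n + 2), ∑ j ∈ range (n + 2 - i), F i j
        = (∑ i ∈ range (n + 1), ∑ j ∈ range (n + 2 - i), F i j) + F (n+1) 0 := by
      rw [Finset.sum_range_succ]; simp
    have h2 : ∀ i ∈ range (n + 1), ∑ j ∈ range (n + 2 - i), F i j
        = (∑ j ∈ range (n + 1 - i), F i j) + F i (n + 1 - i) := by
      intro i hi
      simp only [Finset.mem_range] at hi
      have : n + 2 - i = (n + 1 - i) + 1 := by omega
      rw [this, Finset.sum_range_succ]
    rw [h1, Finset.sum_congr rfl h2, Finset.sum_add_distrib,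
      Finset.sum_range_succ (fun i => F i (n + 1 - i))]
    simp [add_assoc]

/-- substitution of `log1p` into a power series -/
noncomputable def sb (f : PowerSeries ℚ) : PowerSeries ℚ :=
  PowerSeries.mk fun n => ∑ k ∈ range (n + 1), PowerSeries.coeff k f * PowerSeries.coeff n (log1p ^ k)

lemma coeff_sb (f : PowerSeries ℚ) (n : ℕ) :
    PowerSeries.coeff n (sb f) = ∑ k ∈ range (n + 1), PowerSeries.coeff k f * PowerSeries.coeff n (log1p ^ k) := by
  simp [sb]

lemma coeff_sb_pad (f : PowerSeries ℚ) {n N : ℕ} (h : n ≤ N) :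
    PowerSeries.coeff n (sb f) = ∑ k ∈ range (N + 1), PowerSeries.coeff k f * PowerSeries.coeff n (log1p ^ k) := by
  rw [coeff_sb, ← sum_pad h]
  intro m hm
  rw [cLk_zero hm, mul_zero]

lemma sb_one : sb 1 = 1 := by
  ext n
  rw [coeff_sb]
  rcases Nat.eq_zero_or_pos n with h | h
  · subst h; simp
  · rw [PowerSeries.coeff_one, if_neg (by omega)]
    apply Finset.sum_eq_zero
    intro k hk
    rcases Nat.eq_zero_or_pos k with h0 | h0
    · subst h0; simp [PowerSeries.coeff_one]
      intro hn; omega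
    · rw [PowerSeries.coeff_one, if_neg (by omega), zero_mul]

lemma sb_X : sb PowerSeries.X = log1p := by
  ext n
  rw [coeff_sb]
  rcases Nat.eq_zero_or_pos n with h | h
  · subst h; simp [log1p]
  · rw [Finset.sum_eq_single 1]
    · simp
    · intro k hk h1
      rcases Nat.eq_zero_or_pos k with h0 | h0
      · subst h0; simp
      · rw [PowerSeries.coeff_X, if_neg (by omega), zero_mul]
    · intro h1; simp at h1; omega

lemma sb_add (f g : PowerSeries ℚ) : sb (f + g) = sb f + sb g := by
  ext n
  simp [coeff_sb, add_mul, Finset.sum_add_distrib]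

lemma sb_sub (f g : PowerSeries ℚ) : sb (f - g) = sb f - sb g := by
  ext n
  simp [coeff_sb, sub_mul, Finset.sum_sub_distrib]

lemma sb_mul (f g : PowerSeries ℚ) : sb (f * g) = sb f * sb g := by
  ext n
  rw [PowerSeries.coeff_mul, coeff_sb]
  -- RHS : ∑ over antidiagonal n of coeff p (sb f) * coeff q (sb g)
  rw [Finset.Nat.sum_antidiagonal_eq_sum_range_succ_mk]
  have hR : ∀ p ∈ range (n + 1),
      PowerSeries.coeff p (sb f) * PowerSeries.coeff (n - p) (sb g)
      = ∑ i ∈ range (n + 1), ∑ j ∈ range (n + 1),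
          PowerSeries.coeff i f * PowerSeries.coeff j g *
            (PowerSeries.coeff p (log1p ^ i) * PowerSeries.coeff (n - p) (log1p ^ j)) := by
    intro p hp
    simp only [Finset.mem_range] at hp
    rw [coeff_sb_pad f (by omega : p ≤ n), coeff_sb_pad g (by omega : n - p ≤ n),
      Finset.sum_mul_sum]
    apply Finset.sum_congr rfl; intro i _
    apply Finset.sum_congr rfl; intro j _
    ring
  rw [Finset.sum_congr rfl hR]
  rw [Finset.sum_comm]
  have : ∀ i ∈ range (n+1),
      ∑ p ∈ range (n+1), ∑ j ∈ range (n + 1),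
          PowerSeries.coeff i f * PowerSeries.coeff j g *
            (PowerSeries.coeff p (log1p ^ i) * PowerSeries.coeff (n - p) (log1p ^ j))
      = ∑ j ∈ range (n+1), PowerSeries.coeff i f * PowerSeries.coeff j g *
          PowerSeries.coeff n (log1p ^ (i + j)) := by
    intro i _
    rw [Finset.sum_comm]
    apply Finset.sum_congr rfl; intro j _
    rw [← Finset.mul_sum]
    congr 1
    rw [pow_add, PowerSeries.coeff_mul, Finset.Nat.sum_antidiagonal_eq_sum_range_succ_mk]
  rw [Finset.sum_congr rfl this]
  -- LHS: ∑_k (coeff k (f*g)) * c_n(L^k) = ∑_k ∑_{i≤k} f_i g_{k-i} c_n(L^k)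
  have hL : ∀ k ∈ range (n+1),
      PowerSeries.coeff k (f * g) * PowerSeries.coeff n (log1p ^ k)
      = ∑ i ∈ range (k+1), PowerSeries.coeff i f * PowerSeries.coeff (k - i) g *
          PowerSeries.coeff n (log1p ^ k) := by
    intro k _
    rw [PowerSeries.coeff_mul, Finset.Nat.sum_antidiagonal_eq_sum_range_succ_mk, Finset.sum_mul]
  have hL2 : ∀ k ∈ range (n+1),
      ∑ i ∈ range (k+1), PowerSeries.coeff i f * PowerSeries.coeff (k - i) g *
          PowerSeries.coeff n (log1p ^ k)
      = ∑ i ∈ range (k+1), PowerSeries.coeff i f * PowerSeries.coeff (k - i) g *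
          PowerSeries.coeff n (log1p ^ (i + (k - i))) := by
    intro k _
    apply Finset.sum_congr rfl; intro i hi
    simp only [Finset.mem_range] at hi
    rw [show i + (k - i) = k by omega]
  rw [Finset.sum_congr rfl hL, Finset.sum_congr rfl hL2]
  rw [triangle n (fun i j => PowerSeries.coeff i f * PowerSeries.coeff j g *
      PowerSeries.coeff n (log1p ^ (i + j)))]
  · apply Finset.sum_congr rfl; intro i hi
    simp only [Finset.mem_range] at hi
    rw [show n + 1 - i = (n - i) + 1 by omega]
    symm
    apply sum_pad (by omega : n - i ≤ n)
    intro j hj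
    rw [cLk_zero (by omega), mul_zero]
  
lemma sb_pow (f : PowerSeries ℚ) (s : ℕ) : sb (f ^ s) = sb f ^ s := by
  induction s with
  | zero => simpa using sb_one
  | succ s ih => rw [pow_succ, pow_succ, sb_mul, ih]

lemma one_add_X_mul_dL : (1 + PowerSeries.X) * PowerSeries.derivative ℚ log1p = 1 := by
  have hdL : ∀ n : ℕ, PowerSeries.coeff n (PowerSeries.derivative ℚ log1p) = (-1) ^ n := by
    intro n
    rw [PowerSeries.coeff_derivative]
    simp only [log1p, PowerSeries.coeff_mk, if_neg (Nat.succ_ne_zero n)]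
    have : ((n + 1 : ℕ) : ℚ) ≠ 0 := by positivity
    field_simp
    simp only [Nat.add_sub_cancel]; push_cast; ring
  ext n
  rw [add_mul, one_mul, map_add]
  cases n with
  | zero => simp [hdL]
  | succ m =>
    rw [PowerSeries.coeff_succ_X_mul, hdL, hdL, PowerSeries.coeff_one,
      if_neg (Nat.succ_ne_zero m)]
    ring

lemma coeff_X_mul_d (P : PowerSeries ℚ) (n : ℕ) :
    PowerSeries.coeff n (PowerSeries.X * PowerSeries.derivative ℚ P)
      = n * PowerSeries.coeff n P := by
  cases n with
  | zero => simp
  | succ m =>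
    rw [PowerSeries.coeff_succ_X_mul, PowerSeries.coeff_derivative]
    push_cast; ring

lemma keyK (k n : ℕ) :
    (n + 1 : ℚ) * PowerSeries.coeff (n+1) (log1p ^ (k+1))
      + n * PowerSeries.coeff n (log1p ^ (k+1))
    = (k + 1 : ℚ) * PowerSeries.coeff n (log1p ^ k) := by
  have hpow : PowerSeries.derivative ℚ (log1p ^ (k+1))
      = (k+1 : ℕ) • (log1p ^ k * PowerSeries.derivative ℚ log1p) := by
    have := Derivation.leibniz_pow (PowerSeries.derivative ℚ) log1p (n := k + 1)
    simpa using this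
  have hser : (1 + PowerSeries.X) * PowerSeries.derivative ℚ (log1p ^ (k+1))
      = (k+1 : ℕ) • (log1p ^ k) := by
    rw [hpow, mul_smul_comm]
    congr 1
    rw [show (1 + PowerSeries.X) * (log1p ^ k * PowerSeries.derivative ℚ log1p)
        = log1p ^ k * ((1 + PowerSeries.X) * PowerSeries.derivative ℚ log1p) by ring,
      one_add_X_mul_dL, mul_one]
  have := congrArg (PowerSeries.coeff n) hser
  rw [add_mul, one_mul, map_add, coeff_X_mul_d, PowerSeries.coeff_derivative,
    map_nsmul, nsmul_eq_mul] at this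
  push_cast at this ⊢
  linarith [this]

lemma coeff_onePow_s14 (x : ℚ) (n : ℕ) :
    PowerSeries.coeff n (onePow x)
      = ∑ k ∈ range (n + 1), x ^ k / k.factorial * PowerSeries.coeff n (log1p ^ k) := by
  simp only [onePow, expPS, PowerSeries.coeff_mk]
  apply Finset.sum_congr rfl
  intro k _
  rw [mul_pow, ← map_pow, PowerSeries.coeff_C_mul]
  ring

lemma coeff_onePow_eq_ffall (x : ℚ) (n : ℕ) :
    PowerSeries.coeff n (onePow x) = ffall x n / n.factorial := by
  induction n with
  | zero => simp [coeff_onePow_s14, ffall]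
  | succ n ih =>
    have hfac : ((n.factorial : ℚ)) ≠ 0 := by exact_mod_cast n.factorial_ne_zero
    set h : ℕ → ℚ := fun k => x ^ k / k.factorial * PowerSeries.coeff n (log1p ^ k) with hh
    set H : ℕ → ℚ := fun k => x ^ k / k.factorial * PowerSeries.coeff (n+1) (log1p ^ k) with hH
    have hgn : PowerSeries.coeff n (onePow x) = ∑ k ∈ range (n+1), h k := coeff_onePow_s14 x n
    have hgn1 : PowerSeries.coeff (n+1) (onePow x) = ∑ k ∈ range (n+2), H k :=
      coeff_onePow_s14 x (n+1)
    have hterm : ∀ j ∈ range (n+1),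
        (n + 1 : ℚ) * H (j+1) = x * h j - (n : ℚ) * h (j+1) := by
      intro j _
      have hK := keyK j n
      have hjfac' : ((j.factorial : ℚ)) ≠ 0 := by exact_mod_cast j.factorial_ne_zero
      have hfacs : (((j+1).factorial : ℚ)) = (j+1 : ℚ) * (j.factorial : ℚ) := by
        rw [Nat.factorial_succ]; push_cast; ring
      have hkey : (n + 1 : ℚ) * PowerSeries.coeff (n+1) (log1p ^ (j+1))
          = (j + 1 : ℚ) * PowerSeries.coeff n (log1p ^ j)
            - n * PowerSeries.coeff n (log1p ^ (j+1)) := by linarith [hK]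
      simp only [hh, hH]
      rw [show (n + 1 : ℚ) * (x ^ (j+1) / ((j+1).factorial : ℚ) *
          PowerSeries.coeff (n+1) (log1p ^ (j+1)))
          = x ^ (j+1) / ((j+1).factorial : ℚ) *
            ((n + 1 : ℚ) * PowerSeries.coeff (n+1) (log1p ^ (j+1))) by ring, hkey]
      rw [hfacs]
      have : (j + 1 : ℚ) ≠ 0 := by positivity
      field_simp
      ring
    have hH0 : H 0 = 0 := by
      simp only [hH]
      rw [pow_zero log1p, PowerSeries.coeff_one, if_neg (Nat.succ_ne_zero n)]
      simp
    have hh0 : (n : ℚ) * h 0 = 0 := by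
      simp only [hh]
      rw [pow_zero log1p]
      cases n with
      | zero => simp
      | succ m => rw [PowerSeries.coeff_one, if_neg (Nat.succ_ne_zero m)]; simp
    have hhn1 : h (n+1) = 0 := by
      simp only [hh]; rw [cLk_zero (Nat.lt_succ_self n), mul_zero]
    have e1 : ∑ k ∈ range (n+2), H k = ∑ j ∈ range (n+1), H (j+1) + H 0 :=
      Finset.sum_range_succ' H (n+1)
    have e2 : ∑ k ∈ range (n+2), h k = ∑ j ∈ range (n+1), h (j+1) + h 0 :=
      Finset.sum_range_succ' h (n+1)
    have e3 : ∑ k ∈ range (n+2), h k = ∑ k ∈ range (n+1), h k + h (n+1) :=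
      Finset.sum_range_succ h (n+1)
    have hrec : (n + 1 : ℚ) * PowerSeries.coeff (n+1) (onePow x)
        = (x - n) * PowerSeries.coeff n (onePow x) := by
      rw [hgn1, hgn, e1, hH0, add_zero, Finset.mul_sum, Finset.sum_congr rfl hterm,
        Finset.sum_sub_distrib, ← Finset.mul_sum, ← Finset.mul_sum]
      have : ∑ j ∈ range (n+1), h (j+1) = ∑ k ∈ range (n+1), h k + h (n+1) - h 0 := by
        rw [← e3, e2]; ring
      rw [this, hhn1]
      have : (n:ℚ) * (∑ k ∈ range (n+1), h k + 0 - h 0)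
          = (n:ℚ) * ∑ k ∈ range (n+1), h k - (n:ℚ) * h 0 := by ring
      rw [this, hh0, sub_zero]
      ring
    have hn1 : (n + 1 : ℚ) ≠ 0 := by positivity
    have hff : ffall x (n+1) = ffall x n * (x - n) := by
      rw [ffall, ffall, Finset.prod_range_succ]
    have hfacs : (((n+1).factorial : ℚ)) = (n+1 : ℚ) * (n.factorial : ℚ) := by
      rw [Nat.factorial_succ]; push_cast; ring
    rw [ih] at hrec
    have : PowerSeries.coeff (n+1) (onePow x)
        = (x - n) * (ffall x n / n.factorial) / (n+1 : ℚ) := by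
      field_simp at hrec ⊢
      linarith [hrec]
    rw [this, hff, hfacs]
    field_simp

lemma onePow_zero_eq : onePow 0 = 1 := by
  ext n
  rw [coeff_onePow_eq_ffall]
  cases n with
  | zero => simp [ffall]
  | succ m =>
    rw [PowerSeries.coeff_one, if_neg (Nat.succ_ne_zero m)]
    rw [ffall, Finset.prod_eq_zero (Finset.mem_range.2 (Nat.succ_pos m)) (by norm_num)]
    simp

lemma onePow_one_eq : onePow 1 = 1 + PowerSeries.X := by
  ext n
  rw [coeff_onePow_eq_ffall, map_add]
  match n with
  | 0 => simp [ffall]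
  | 1 => simp [ffall]
  | (m+2) =>
    rw [PowerSeries.coeff_one, if_neg (by omega), PowerSeries.coeff_X, if_neg (by omega)]
    rw [ffall, Finset.prod_eq_zero (Finset.mem_range.2 (by omega : 1 < m + 2)) (by norm_num)]
    simp

lemma sb_expAt (c : ℚ) : sb (expAt c) = onePow c := by
  ext n
  rw [coeff_sb, coeff_onePow_s14]
  apply Finset.sum_congr rfl
  intro k _
  rw [expAt, PowerSeries.coeff_mk]

lemma coeff_one_onePow_s14 (c : ℚ) : PowerSeries.coeff 1 (onePow c) = c := by
  rw [coeff_onePow_eq_ffall]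
  simp [ffall]

lemma poly_coeff_eq {N : ℕ} (b c : ℕ → ℚ)
    (h : ∀ x : ℚ, ∑ k ∈ range N, b k * x ^ k = ∑ k ∈ range N, c k * x ^ k) :
    ∀ k ∈ range N, b k = c k := by
  have hpq : (∑ k ∈ range N, Polynomial.C (b k) * Polynomial.X ^ k)
      = ∑ k ∈ range N, Polynomial.C (c k) * Polynomial.X ^ k := by
    apply Polynomial.funext
    intro r
    rw [Polynomial.eval_finset_sum, Polynomial.eval_finset_sum]
    simpa using h r
  intro k hk
  have := congrArg (fun p => Polynomial.coeff p k) hpq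
  simpa [Polynomial.finset_sum_coeff, Polynomial.coeff_C_mul, Polynomial.coeff_X_pow,
    Finset.sum_ite_eq' (range N) k, hk] using this

lemma box (n : ℕ) (T : ℕ → ℕ → ℕ → ℚ) :
    ∑ i ∈ range (n+1), ∑ l ∈ range (n-i+1), ∑ m ∈ range (n-i-l+1), T i l m
  = ∑ i ∈ range (n+1), ∑ l ∈ range (n+1), ∑ m ∈ range (n+1),
      (if i + l + m ≤ n then T i l m else 0) := by
  apply Finset.sum_congr rfl
  intro i hi
  simp only [Finset.mem_range] at hi
  symm
  rw [sum_pad (by omega : n - i ≤ n)]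
  · apply Finset.sum_congr rfl
    intro l hl
    simp only [Finset.mem_range] at hl
    rw [sum_pad (by omega : n - i - l ≤ n)]
    · apply Finset.sum_congr rfl
      intro m hm
      simp only [Finset.mem_range] at hm
      rw [if_pos (by omega)]
    · intro m hm
      rw [if_neg (by omega)]
  · intro l hl
    apply Finset.sum_eq_zero
    intro m hm
    rw [if_neg (by omega)]

lemma tri3 (n : ℕ) (T : ℕ → ℕ → ℕ → ℚ) :
    ∑ i ∈ range (n+1), ∑ l ∈ range (n-i+1), ∑ m ∈ range (n-i-l+1), T i l m
  = ∑ m ∈ range (n+1), ∑ i ∈ range (n-m+1), ∑ l ∈ range (n-m-i+1), T i l m := by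
  rw [box n T, box n (fun m i l => T i l m)]
  have : ∀ m ∈ range (n+1), ∀ i ∈ range (n+1), ∀ l ∈ range (n+1),
      (if m + i + l ≤ n then T i l m else 0) = (if i + l + m ≤ n then T i l m else 0) := by
    intro m _ i _ l _
    by_cases h : i + l + m ≤ n
    · rw [if_pos h, if_pos (by omega)]
    · rw [if_neg h, if_neg (by omega)]
  rw [Finset.sum_congr rfl (fun m hm => Finset.sum_congr rfl (fun i hi =>
    Finset.sum_congr rfl (fun l hl => this m hm i hi l hl)))]
  symm
  calc ∑ m ∈ range (n+1), ∑ i ∈ range (n+1), ∑ l ∈ range (n+1),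
        (if i + l + m ≤ n then T i l m else 0)
      = ∑ i ∈ range (n+1), ∑ m ∈ range (n+1), ∑ l ∈ range (n+1),
        (if i + l + m ≤ n then T i l m else 0) :=
        Finset.sum_comm (f := fun m i => ∑ l ∈ range (n+1), (if i + l + m ≤ n then T i l m else 0))
    _ = ∑ i ∈ range (n+1), ∑ l ∈ range (n+1), ∑ m ∈ range (n+1),
        (if i + l + m ≤ n then T i l m else 0) := by
        apply Finset.sum_congr rfl
        intro i _
        exact Finset.sum_comm (f := fun m l => if i + l + m ≤ n then T i l m else 0)


theorem stmt14 (r : ℕ) (a : Fin r → ℚ) (ha : ∀ j, a j ≠ 0) (s : ℕ) (D : ℕ → ℚ → ℚ)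
    (hD : ∀ x : ℚ, (∏ j, (onePow (a j) - 1)) * egf (fun n => D n x) = log1p ^ r * onePow x)
    (S1 : ℕ → ℕ → ℚ) (hS1 : ∀ (l : ℕ) (x : ℚ), ffall x l = ∑ j ∈ Finset.range (l + 1), S1 l j * x ^ j)
    (Bs : ℕ → ℚ → ℚ)
    (hBs : ∀ x : ℚ, (expAt 1 - 1) ^ s * egf (fun n => Bs n x) =
      (PowerSeries.X : PowerSeries ℚ) ^ s * expAt x)
    (cs : ℕ → ℚ)
    (hcs : log1p ^ s * egf cs = (PowerSeries.X : PowerSeries ℚ) ^ s)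
    (n : ℕ) (x : ℚ) :
    D n x = ∑ m ∈ Finset.range (n + 1),
      (∑ i ∈ Finset.range (n - m + 1), ∑ l ∈ Finset.range (n - m - i + 1),
        (n.choose i : ℚ) * ((n - i).choose l : ℚ) * cs i * S1 (n - i - l) m * D l 0) *
        Bs m x := by
  -- Stirling numbers as coefficients of powers of log1p
  have hLS1 : ∀ (N m : ℕ), m ∈ range (N + 1) →
      PowerSeries.coeff N (log1p ^ m) = S1 N m * m.factorial / N.factorial := by
    intro N m hm
    have key := poly_coeff_eq (N := N + 1)
      (fun k => PowerSeries.coeff N (log1p ^ k) / k.factorial)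
      (fun k => S1 N k / N.factorial) ?_ m hm
    · have hmf : ((m.factorial : ℚ)) ≠ 0 := by exact_mod_cast m.factorial_ne_zero
      field_simp at key ⊢
      linarith [key]
    · intro y
      have h1 : ∑ k ∈ range (N + 1),
          PowerSeries.coeff N (log1p ^ k) / k.factorial * y ^ k
          = PowerSeries.coeff N (onePow y) := by
        rw [coeff_onePow_s14]
        apply Finset.sum_congr rfl
        intro k _; ring
      have h2 : ∑ k ∈ range (N + 1), S1 N k / N.factorial * y ^ k
          = ffall y N / N.factorial := by
        rw [hS1 N y, Finset.sum_div]
        apply Finset.sum_congr rfl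
        intro k _; ring
      rw [h1, h2, coeff_onePow_eq_ffall]
  -- cancel the product to get egf (D · x) = egf (D · 0) * onePow x
  have hD0 := hD 0
  rw [onePow_zero_eq, mul_one] at hD0
  have hPne : (∏ j, (onePow (a j) - 1)) ≠ 0 := by
    apply Finset.prod_ne_zero_iff.2
    intro j _ hzero
    have h1 := congrArg (PowerSeries.coeff 1) hzero
    rw [map_sub, coeff_one_onePow_s14, PowerSeries.coeff_one, if_neg one_ne_zero, map_zero,
      sub_zero] at h1
    exact ha j h1
  have heq1 : egf (fun k => D k x) = egf (fun k => D k 0) * onePow x := by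
    apply mul_left_cancel₀ hPne
    rw [hD x, ← hD0]
    ring
  -- substituted Bernoulli identity
  set G := sb (egf fun k => Bs k x) with hGdef
  have hG : (PowerSeries.X : PowerSeries ℚ) ^ s * G = log1p ^ s * onePow x := by
    have h := congrArg sb (hBs x)
    rw [sb_mul, sb_mul, sb_pow, sb_pow, sb_sub, sb_expAt, sb_one, sb_X, sb_expAt,
      onePow_one_eq] at h
    rw [hGdef]
    rw [show (1 + PowerSeries.X - 1 : PowerSeries ℚ) = PowerSeries.X by ring] at h
    exact h.symm ▸ h
  have hXs : (PowerSeries.X : PowerSeries ℚ) ^ s ≠ 0 := pow_ne_zero _ PowerSeries.X_ne_zero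
  have heq2 : onePow x = egf cs * G := by
    apply mul_left_cancel₀ hXs
    calc (PowerSeries.X : PowerSeries ℚ) ^ s * onePow x
        = (log1p ^ s * egf cs) * onePow x := by rw [hcs]
      _ = egf cs * (log1p ^ s * onePow x) := by ring
      _ = egf cs * ((PowerSeries.X : PowerSeries ℚ) ^ s * G) := by rw [hG]
      _ = (PowerSeries.X : PowerSeries ℚ) ^ s * (egf cs * G) := by ring
  have hfin : egf (fun k => D k x) = egf cs * (egf (fun k => D k 0) * G) := by
    rw [heq1, heq2]; ring
  -- coefficient of G
  have hGk : ∀ k : ℕ, PowerSeries.coeff k G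
      = ∑ m ∈ range (k + 1), Bs m x * S1 k m / k.factorial := by
    intro k
    rw [hGdef, coeff_sb]
    apply Finset.sum_congr rfl
    intro m hm
    rw [hLS1 k m hm]
    have hmf : ((m.factorial : ℚ)) ≠ 0 := by exact_mod_cast m.factorial_ne_zero
    rw [egf, PowerSeries.coeff_mk]
    field_simp
  -- extract coefficient n
  have hcoeff := congrArg (PowerSeries.coeff n) hfin
  rw [egf, PowerSeries.coeff_mk, PowerSeries.coeff_mul,
    Finset.Nat.sum_antidiagonal_eq_sum_range_succ_mk] at hcoeff
  have hinner : ∀ i ∈ range (n + 1),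
      PowerSeries.coeff i (egf cs) * PowerSeries.coeff (n - i) (egf (fun k => D k 0) * G)
      = ∑ l ∈ range (n - i + 1), cs i / i.factorial *
          (D l 0 / l.factorial *
            ∑ m ∈ range (n - i - l + 1), Bs m x * S1 (n - i - l) m / (n - i - l).factorial) := by
    intro i _
    rw [PowerSeries.coeff_mul, Finset.Nat.sum_antidiagonal_eq_sum_range_succ_mk,
      Finset.mul_sum]
    apply Finset.sum_congr rfl
    intro l _
    rw [egf, egf, PowerSeries.coeff_mk, PowerSeries.coeff_mk, hGk]
  rw [Finset.sum_congr rfl hinner] at hcoeff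
  -- multiply by n!
  have hnf : ((n.factorial : ℚ)) ≠ 0 := by exact_mod_cast n.factorial_ne_zero
  have hD' : D n x = ∑ i ∈ range (n + 1), ∑ l ∈ range (n - i + 1),
      ∑ m ∈ range (n - i - l + 1),
        (n.factorial : ℚ) * (cs i / i.factorial * (D l 0 / l.factorial *
          (Bs m x * S1 (n - i - l) m / (n - i - l).factorial))) := by
    have : D n x = (n.factorial : ℚ) * (D n x / n.factorial) := by field_simp
    rw [this, hcoeff, Finset.mul_sum]
    apply Finset.sum_congr rfl
    intro i _
    rw [Finset.mul_sum]
    apply Finset.sum_congr rfl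
    intro l _
    rw [Finset.mul_sum, Finset.mul_sum, Finset.mul_sum]
  -- rewrite the coefficients with binomials
  have hbin : ∀ i ∈ range (n + 1), ∀ l ∈ range (n - i + 1), ∀ m ∈ range (n - i - l + 1),
      (n.factorial : ℚ) * (cs i / i.factorial * (D l 0 / l.factorial *
          (Bs m x * S1 (n - i - l) m / (n - i - l).factorial)))
      = (n.choose i : ℚ) * ((n - i).choose l : ℚ) * cs i * S1 (n - i - l) m * D l 0 * Bs m x := by
    intro i hi l hl m _
    simp only [Finset.mem_range] at hi hl
    have h1 : n.choose i * i.factorial * (n - i).factorial = n.factorial :=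
      Nat.choose_mul_factorial_mul_factorial (by omega)
    have h2 : (n - i).choose l * l.factorial * (n - i - l).factorial = (n - i).factorial :=
      Nat.choose_mul_factorial_mul_factorial (by omega)
    have h1' : ((n.choose i : ℚ)) * i.factorial * (n - i).factorial = n.factorial := by
      exact_mod_cast congrArg (Nat.cast : ℕ → ℚ) h1
    have h2' : (((n - i).choose l : ℚ)) * l.factorial * (n - i - l).factorial
        = (n - i).factorial := by
      exact_mod_cast congrArg (Nat.cast : ℕ → ℚ) h2
    have hif : ((i.factorial : ℚ)) ≠ 0 := by exact_mod_cast i.factorial_ne_zero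
    have hlf : ((l.factorial : ℚ)) ≠ 0 := by exact_mod_cast l.factorial_ne_zero
    have hkf : (((n - i - l).factorial : ℚ)) ≠ 0 := by
      exact_mod_cast (n - i - l).factorial_ne_zero
    have hnif : (((n - i).factorial : ℚ)) ≠ 0 := by exact_mod_cast (n - i).factorial_ne_zero
    field_simp
    rw [← h1', ← h2']
    ring
  rw [Finset.sum_congr rfl (fun i hi => Finset.sum_congr rfl (fun l hl =>
    Finset.sum_congr rfl (fun m hm => hbin i hi l hl m hm)))] at hD'
  rw [hD', tri3 n (fun i l m => (n.choose i : ℚ) * ((n - i).choose l : ℚ) * cs i *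
      S1 (n - i - l) m * D l 0 * Bs m x)]
  apply Finset.sum_congr rfl
  intro m _
  rw [Finset.sum_mul]
  apply Finset.sum_congr rfl
  intro i _
  rw [Finset.sum_mul]
end
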